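/- Let t be a real number with 0 < t < 1 and let x be a real number with 0 < x < 1. Then |∑_{n=1}^{∞} (1 − t^n) sin(2πnx)/n| ≤ π/2. -/

import Mathlib

open Filter Finset Real Complex Topology

private lemma arg_nonpos_of {z : ℂ} (hre : 0 ≤ z.re) (him : z.im ≤ 0) : z.arg ≤ 0 := by
  rcases him.lt_or_eq with h | h
  · exact (Complex.arg_neg_iff.2 h).le
  · have hz : z = (z.re : ℂ) := Complex.ext rfl (by simp [h])
    rw [hz, Complex.arg_ofReal_of_nonneg hre]

private lemma key_bound (t x r : ℝ) (ht0 : 0 < t) (ht1 : t < 1) (hr0 : 0 < r) (hr1 : r < 1) :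
    |∑' n : ℕ, ((1 - t ^ n) * Real.sin (2 * Real.pi * n * x) / n) * r ^ n| ≤ Real.pi / 2 := by
  set e : ℂ := Complex.exp ((2 * Real.pi * x : ℝ) * Complex.I) with he
  set z : ℂ := (r : ℂ) * e with hzdef
  set w : ℂ := ((t * r : ℝ) : ℂ) * e with hwdef
  have hez : ∀ s : ℝ, ‖((s : ℂ) * e)‖ = |s| := by
    intro s
    rw [norm_mul, Complex.norm_real, Real.norm_eq_abs, he, Complex.norm_exp_ofReal_mul_I,
      mul_one]
  have hz1 : ‖z‖ < 1 := by rw [hzdef, hez]; rwa [abs_of_pos hr0]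
  have hw1 : ‖w‖ < 1 := by
    rw [hwdef, hez, abs_of_pos (mul_pos ht0 hr0)]
    nlinarith
  have h1 := Complex.hasSum_taylorSeries_neg_log hz1
  have h2 := Complex.hasSum_taylorSeries_neg_log hw1
  have h3 := (h1.sub h2).mapL Complex.imCLM
  have hterm : ∀ n : ℕ,
      Complex.imCLM (z ^ n / n - w ^ n / n) = ((1 - t ^ n) * Real.sin (2 * Real.pi * n * x) / n) * r ^ n := by
    intro n
    have hen : e ^ n = Complex.exp ((2 * Real.pi * n * x : ℝ) * Complex.I) := by
      rw [he, ← Complex.exp_nat_mul]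
      congr 1
      push_cast
      ring
    have hzn : z ^ n = ((r ^ n : ℝ) : ℂ) * Complex.exp ((2 * Real.pi * n * x : ℝ) * Complex.I) := by
      rw [hzdef, mul_pow, hen]; push_cast; ring
    have hwn : w ^ n = (((t * r) ^ n : ℝ) : ℂ) * Complex.exp ((2 * Real.pi * n * x : ℝ) * Complex.I) := by
      rw [hwdef, mul_pow, hen]; push_cast; ring
    rcases n with _ | m
    · simp
    · have hn : ((m + 1 : ℕ) : ℂ) ≠ 0 := Nat.cast_ne_zero.2 (Nat.succ_ne_zero m)
      have : z ^ (m + 1) / ((m + 1 : ℕ) : ℂ) - w ^ (m + 1) / ((m + 1 : ℕ) : ℂ) =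
          (((1 - t ^ (m + 1)) * r ^ (m + 1) / ((m + 1 : ℕ) : ℝ) : ℝ) : ℂ) *
            Complex.exp ((2 * Real.pi * (m + 1 : ℕ) * x : ℝ) * Complex.I) := by
        rw [hzn, hwn]
        have hnR : ((m + 1 : ℕ) : ℝ) ≠ 0 := Nat.cast_ne_zero.2 (Nat.succ_ne_zero m)
        push_cast
        field_simp
        ring
      rw [Complex.imCLM_apply, this]
      simp only [Complex.im_ofReal_mul, Complex.exp_ofReal_mul_I_im]
      push_cast
      ring
  have h4 : HasSum (fun n : ℕ => ((1 - t ^ n) * Real.sin (2 * Real.pi * n * x) / n) * r ^ n)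
      (Complex.imCLM (-Complex.log (1 - z) - -Complex.log (1 - w))) := by
    exact h3.congr_fun fun n => (hterm n).symm
  rw [h4.tsum_eq]
  have hval : Complex.imCLM (-Complex.log (1 - z) - -Complex.log (1 - w)) =
      (1 - w).arg - (1 - z).arg := by
    simp only [Complex.imCLM_apply, Complex.sub_im, Complex.neg_im, Complex.log_im]
    ring
  rw [hval]
  have heRe : e.re = Real.cos (2 * Real.pi * x) := by
    rw [he]; exact Complex.exp_ofReal_mul_I_re _
  have heIm : e.im = Real.sin (2 * Real.pi * x) := by
    rw [he]; exact Complex.exp_ofReal_mul_I_im _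
  have hreZ : (1 - z).re = 1 - r * Real.cos (2 * Real.pi * x) := by
    rw [hzdef]
    simp only [Complex.sub_re, Complex.one_re, Complex.re_ofReal_mul, heRe]
  have hreW : (1 - w).re = 1 - t * r * Real.cos (2 * Real.pi * x) := by
    rw [hwdef]
    simp only [Complex.sub_re, Complex.one_re, Complex.re_ofReal_mul, heRe]
  have himZ : (1 - z).im = -(r * Real.sin (2 * Real.pi * x)) := by
    rw [hzdef]
    simp only [Complex.sub_im, Complex.one_im, Complex.im_ofReal_mul, heIm]
    ring
  have himW : (1 - w).im = -(t * r * Real.sin (2 * Real.pi * x)) := by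
    rw [hwdef]
    simp only [Complex.sub_im, Complex.one_im, Complex.im_ofReal_mul, heIm]
    ring
  have hc1 := Real.cos_le_one (2 * Real.pi * x)
  have hc2 := Real.neg_one_le_cos (2 * Real.pi * x)
  have hreZ0 : (0 : ℝ) ≤ (1 - z).re := by rw [hreZ]; nlinarith
  have hreW0 : (0 : ℝ) ≤ (1 - w).re := by rw [hreW]; nlinarith
  have hZ2 := abs_le.1 (Complex.abs_arg_le_pi_div_two_iff.2 hreZ0)
  have hW2 := abs_le.1 (Complex.abs_arg_le_pi_div_two_iff.2 hreW0)
  rcases le_total 0 (Real.sin (2 * Real.pi * x)) with hs | hs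
  · have hZn : (1 - z).arg ≤ 0 := arg_nonpos_of hreZ0
      (by rw [himZ]; nlinarith [mul_nonneg hr0.le hs])
    have hWn : (1 - w).arg ≤ 0 := arg_nonpos_of hreW0
      (by rw [himW]; nlinarith [mul_nonneg (mul_nonneg ht0.le hr0.le) hs])
    rw [abs_le]
    constructor <;> linarith [hZ2.1, hZ2.2, hW2.1, hW2.2]
  · have hZn : 0 ≤ (1 - z).arg := Complex.arg_nonneg_iff.2
      (by rw [himZ]; nlinarith [mul_nonpos_of_nonneg_of_nonpos hr0.le hs])
    have hWn : 0 ≤ (1 - w).arg := Complex.arg_nonneg_iff.2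
      (by rw [himW]; nlinarith [mul_nonpos_of_nonneg_of_nonpos (mul_nonneg ht0.le hr0.le) hs])
    rw [abs_le]
    constructor <;> linarith [hZ2.1, hZ2.2, hW2.1, hW2.2]

theorem tail_sin_series_le_pi_div_two (t x : ℝ) (ht0 : 0 < t) (ht1 : t < 1)
    (hx0 : 0 < x) (hx1 : x < 1) (L : ℝ)
    (hL : Filter.Tendsto
      (fun N => ∑ n ∈ Finset.range N,
        (1 - t ^ (n + 1)) * Real.sin (2 * Real.pi * (n + 1) * x) / (n + 1))
      Filter.atTop (nhds L)) :
    |L| ≤ Real.pi / 2 := by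
  set f : ℕ → ℝ := fun n => (1 - t ^ n) * Real.sin (2 * Real.pi * n * x) / n with hf
  have hL' : Tendsto (fun N => ∑ n ∈ Finset.range N, f n) atTop (𝓝 L) := by
    apply (tendsto_add_atTop_iff_nat 1).1
    have heq : (fun N => ∑ n ∈ Finset.range (N + 1), f n) =
        (fun N => ∑ n ∈ Finset.range N,
          (1 - t ^ (n + 1)) * Real.sin (2 * Real.pi * (n + 1) * x) / (n + 1)) := by
      funext N
      rw [Finset.sum_range_succ']
      have hf0 : f 0 = 0 := by simp [hf]
      rw [hf0, add_zero]
      refine Finset.sum_congr rfl fun i _ => ?_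
      simp only [hf]
      push_cast
      ring
    rw [heq]
    exact hL
  have habel := Real.tendsto_tsum_powerSeries_nhdsWithin_lt hL'
  refine le_of_tendsto habel.abs ?_
  filter_upwards [Ioo_mem_nhdsLT_of_mem (Set.right_mem_Ioc.2 zero_lt_one)] with r hr
  exact key_bound t x r ht0 ht1 hr.1 hr.2
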